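/- The function H_M(x,y,z,E,B) = (1/2)α²y² - αyB + αμ²z + (1/2)μ²E² + (1/2)B² is a first integral of the ODE system ẋ = -y, ẏ = x + zE, ż = -yE, Ė = B, Ḃ = α(x + zE) - μ²E. -/

import Mathlib

/-- H_M = (1/2)α²y² - αyB + αμ²z + (1/2)μ²E² + (1/2)B² is a first integral of the
Milonni version of the semiclassical Jaynes–Cummings system. -/
theorem HM_first_integral_Milonni (α μ : ℝ) (x y z E B : ℝ → ℝ)
    (hx : ∀ t, HasDerivAt x (-(y t)) t)
    (hy : ∀ t, HasDerivAt y (x t + z t * E t) t)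
    (hz : ∀ t, HasDerivAt z (-(y t) * E t) t)
    (hE : ∀ t, HasDerivAt E (B t) t)
    (hB : ∀ t, HasDerivAt B (α * (x t + z t * E t) - μ ^ 2 * E t) t) :
    ∀ t, HasDerivAt
      (fun s => (1/2) * α ^ 2 * y s ^ 2 - α * y s * B s + α * μ ^ 2 * z s
        + (1/2) * μ ^ 2 * E s ^ 2 + (1/2) * B s ^ 2) 0 t := by
  intro t
  have h := ((((((hy t).pow 2).const_mul ((1/2)*α^2)).sub (((hy t).mul (hB t)).const_mul α)).add ((hz t).const_mul (α*μ^2))).add (((hE t).pow 2).const_mul ((1/2)*μ^2))).add (((hB t).pow 2).const_mul (1/2))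
  refine (h.congr_deriv ?_).congr_of_eventuallyEq (Filter.EventuallyEq.of_eq ?_)
  swap
  · funext s; simp only [Pi.add_apply, Pi.sub_apply, Pi.mul_apply, Pi.pow_apply]; ring
  · norm_num; ring
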